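/- Let S²T*⊗T_v* denote the space of trilinear forms B on V symmetric in the first two arguments and semi-basic in the third argument, and define σ²(P) : S²T*⊗T_v* → F ⊕ F by σ²(P)B = (σ_J B, σ_h B), where (σ_K B)(X,Y,Z) = B(X,KY,Z) − B(X,KZ,Y), and F is the space of trilinear forms alternating and semi-basic in the last two arguments. Let Λ³_v be the space of alternating trilinear forms on V semi-basic in every argument, and let τ : F ⊕ F → Λ³_v ⊕ Λ³_v ⊕ Λ³_v be given by τ(C₁,C₂) = (τ_J C₁, τ_h C₂, τ_h C₁ + τ_J C₂), where (τ_K C)(X,Y,Z) = C(KX,Y,Z) − C(KY,X,Z) + C(KZ,X,Y). Then the sequence is exact at F ⊕ F: the kernel of τ equals the image of σ²(P). -/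

import Mathlib

open Module

/-- Model of the tangent space of `J¹π` at a point: `V = ℝ^{n+1} × ℝ^n`, the first
factor spanned by the horizontal vectors `e_0, …, e_n` (`e_0` the time direction),
the second by the vertical vectors `f_1, …, f_n` (here `f_k = fbase ⟨k-1,_⟩`). -/
abbrev Vv (n : ℕ) : Type := (Fin (n + 1) → ℝ) × (Fin n → ℝ)

/-- A vector of `V` is vertical if it lies in the span of `f_1, …, f_n`,
i.e. its first component vanishes. -/
def IsVert {n : ℕ} (v : Vv n) : Prop := v.1 = 0

/-- The vertical endomorphism `J : V → V`: `J e_0 = 0`, `J e_i = f_i` (1 ≤ i ≤ n),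
`J f_i = 0`. -/
noncomputable def Jv (n : ℕ) : Vv n →ₗ[ℝ] Vv n :=
  LinearMap.prod 0
    ((LinearMap.funLeft ℝ ℝ Fin.succ).comp (LinearMap.fst ℝ (Fin (n + 1) → ℝ) (Fin n → ℝ)))

/-- The horizontal projector `h : V → V`: `h e_α = e_α` (0 ≤ α ≤ n), `h f_i = 0`. -/
noncomputable def Hv (n : ℕ) : Vv n →ₗ[ℝ] Vv n :=
  LinearMap.prod (LinearMap.fst ℝ (Fin (n + 1) → ℝ) (Fin n → ℝ)) 0

set_option maxSynthPendingDepth 3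
set_option synthInstance.maxHeartbeats 400000

/-- `F`: the space of trilinear forms on `V` that are alternating in the last two
arguments and semi-basic in the last two arguments (model of `T* ⊗ Λ²T_v*`). -/
noncomputable def Fsub (n : ℕ) : Submodule ℝ (Vv n →ₗ[ℝ] Vv n →ₗ[ℝ] Vv n →ₗ[ℝ] ℝ) where
  carrier := { C | (∀ X Y Z, C X Y Z = - C X Z Y) ∧
    (∀ X v Z, IsVert v → C X v Z = 0) ∧
    (∀ X Y v, IsVert v → C X Y v = 0) }
  add_mem' := by
    rintro A B ⟨a1, a2, a3⟩ ⟨b1, b2, b3⟩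
    refine ⟨fun X Y Z => ?_, fun X v Z hv => ?_, fun X Y v hv => ?_⟩
    · simp only [LinearMap.add_apply]; rw [a1, b1]; ring
    · simp [a2 X v Z hv, b2 X v Z hv]
    · simp [a3 X Y v hv, b3 X Y v hv]
  zero_mem' := by
    refine ⟨fun X Y Z => ?_, fun X v Z hv => ?_, fun X Y v hv => ?_⟩ <;> simp
  smul_mem' := by
    rintro c A ⟨a1, a2, a3⟩
    refine ⟨fun X Y Z => ?_, fun X v Z hv => ?_, fun X Y v hv => ?_⟩
    · simp only [LinearMap.smul_apply, smul_eq_mul]; rw [a1]; ring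
    · simp [a2 X v Z hv]
    · simp [a3 X Y v hv]

/-- `S²T* ⊗ T_v*`: the space of trilinear forms on `V` that are symmetric in the
first two arguments and semi-basic in the third argument. -/
noncomputable def S2Tv (n : ℕ) : Submodule ℝ (Vv n →ₗ[ℝ] Vv n →ₗ[ℝ] Vv n →ₗ[ℝ] ℝ) where
  carrier := { B | (∀ X Y Z, B X Y Z = B Y X Z) ∧ (∀ X Y v, IsVert v → B X Y v = 0) }
  add_mem' := by
    rintro A B ⟨a1, a2⟩ ⟨b1, b2⟩
    refine ⟨fun X Y Z => ?_, fun X Y v hv => ?_⟩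
    · simp only [LinearMap.add_apply]; rw [a1, b1]
    · simp [a2 X Y v hv, b2 X Y v hv]
  zero_mem' := by refine ⟨fun X Y Z => ?_, fun X Y v hv => ?_⟩ <;> simp
  smul_mem' := by
    rintro c A ⟨a1, a2⟩
    refine ⟨fun X Y Z => ?_, fun X Y v hv => ?_⟩
    · simp only [LinearMap.smul_apply, smul_eq_mul]; rw [a1]
    · simp [a2 X Y v hv]

/-- The alternating operator `τ_K`:
`(τ_K C)(X,Y,Z) = C(KX,Y,Z) − C(KY,X,Z) + C(KZ,X,Y)`. -/
noncomputable def tauF (n : ℕ) (K : Vv n →ₗ[ℝ] Vv n)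
    (C : Vv n →ₗ[ℝ] Vv n →ₗ[ℝ] Vv n →ₗ[ℝ] ℝ) : Vv n → Vv n → Vv n → ℝ :=
  fun X Y Z => C (K X) Y Z - C (K Y) X Z + C (K Z) X Y

/-- The prolonged symbol `σ_K`: `(σ_K B)(X,Y,Z) = B(X,KY,Z) − B(X,KZ,Y)`. -/
noncomputable def sigmaF (n : ℕ) (K : Vv n →ₗ[ℝ] Vv n)
    (B : Vv n →ₗ[ℝ] Vv n →ₗ[ℝ] Vv n →ₗ[ℝ] ℝ) : Vv n → Vv n → Vv n → ℝ :=
  fun X Y Z => B X (K Y) Z - B X (K Z) Y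

noncomputable def Th (n : ℕ) : Vv n →ₗ[ℝ] Vv n where
  toFun v := (Fin.cases 0 v.2, 0)
  map_add' u v := by
    refine Prod.ext ?_ (by simp)
    funext α
    refine Fin.cases ?_ (fun i => ?_) α <;> simp
  map_smul' r v := by
    refine Prod.ext ?_ (by simp)
    funext α
    refine Fin.cases ?_ (fun i => ?_) α <;> simp

noncomputable def P0 (n : ℕ) : Vv n →ₗ[ℝ] Vv n where
  toFun v := (Fin.cases (v.1 0) 0, 0)
  map_add' u v := by
    refine Prod.ext ?_ (by simp)
    funext α
    refine Fin.cases ?_ (fun i => ?_) α <;> simp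
  map_smul' r v := by
    refine Prod.ext ?_ (by simp)
    funext α
    refine Fin.cases ?_ (fun i => ?_) α <;> simp

section OpLemmas
variable {n : ℕ}

lemma hv_apply' (X : Vv n) : Hv n X = (X.1, 0) := rfl
lemma jv_apply' (X : Vv n) : Jv n X = (0, fun i => X.1 i.succ) := rfl
lemma th_apply' (X : Vv n) : Th n X = (Fin.cases 0 X.2, 0) := rfl
lemma p0_apply' (X : Vv n) : P0 n X = (Fin.cases (X.1 0) 0, 0) := rfl
lemma LinearMap.id_apply' (X : Vv n) : (LinearMap.id : Vv n →ₗ[ℝ] Vv n) X = X := rfl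

lemma hv_hv (X : Vv n) : Hv n (Hv n X) = Hv n X := rfl
lemma jv_hv (X : Vv n) : Jv n (Hv n X) = Jv n X := rfl
lemma hv_jv (X : Vv n) : Hv n (Jv n X) = 0 := rfl
lemma jv_jv (X : Vv n) : Jv n (Jv n X) = 0 := rfl
lemma th_hv (X : Vv n) : Th n (Hv n X) = 0 := by
  refine Prod.ext ?_ rfl
  funext α; refine Fin.cases ?_ (fun i => ?_) α <;> simp [th_apply', hv_apply']
lemma th_jv (X : Vv n) : Th n (Jv n X) = Hv n X - P0 n X := by
  refine Prod.ext ?_ (by simp [th_apply', hv_apply', p0_apply'])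
  funext α; refine Fin.cases ?_ (fun i => ?_) α <;>
    simp [th_apply', hv_apply', p0_apply', jv_apply']
lemma jv_th (X : Vv n) : Jv n (Th n X) = X - Hv n X := by
  refine Prod.ext (by simp [jv_apply', th_apply', hv_apply']) ?_
  funext i; simp [jv_apply', th_apply', hv_apply']
lemma th_th (X : Vv n) : Th n (Th n X) = 0 := by
  refine Prod.ext ?_ rfl
  funext α; refine Fin.cases ?_ (fun i => ?_) α <;> simp [th_apply']
lemma p0_hv (X : Vv n) : P0 n (Hv n X) = P0 n X := rfl
lemma hv_p0 (X : Vv n) : Hv n (P0 n X) = P0 n X := rfl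
lemma p0_p0 (X : Vv n) : P0 n (P0 n X) = P0 n X := by
  refine Prod.ext ?_ rfl
  funext α; refine Fin.cases ?_ (fun i => ?_) α <;> simp [p0_apply']
lemma p0_jv (X : Vv n) : P0 n (Jv n X) = 0 := by
  refine Prod.ext ?_ rfl
  funext α; refine Fin.cases ?_ (fun i => ?_) α <;> simp [p0_apply', jv_apply']
lemma jv_p0 (X : Vv n) : Jv n (P0 n X) = 0 := by
  refine Prod.ext rfl ?_
  funext i; simp [jv_apply', p0_apply']
lemma p0_th (X : Vv n) : P0 n (Th n X) = 0 := by
  refine Prod.ext ?_ rfl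
  funext α; refine Fin.cases ?_ (fun i => ?_) α <;> simp [p0_apply', th_apply']
lemma th_p0 (X : Vv n) : Th n (P0 n X) = 0 := by
  refine Prod.ext ?_ rfl
  funext α; refine Fin.cases ?_ (fun i => ?_) α <;> simp [th_apply', p0_apply']
lemma hv_th (X : Vv n) : Hv n (Th n X) = Th n X := Prod.ext rfl rfl

lemma hv_vert {v : Vv n} (hv : IsVert v) : Hv n v = 0 := by
  refine Prod.ext ?_ rfl; simpa [hv_apply'] using (show v.1 = 0 from hv)
lemma p0_vert {v : Vv n} (hv : IsVert v) : P0 n v = 0 := by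
  have h1 : v.1 = 0 := hv
  refine Prod.ext ?_ rfl
  funext α; refine Fin.cases ?_ (fun i => ?_) α <;> simp [p0_apply', h1]
lemma isVert_sub_hv (y : Vv n) : IsVert (y - Hv n y) := by
  simp [IsVert, hv_apply']

noncomputable def e0v (n : ℕ) : Vv n := (Fin.cases 1 0, 0)
lemma p0_eq_smul (X : Vv n) : P0 n X = (X.1 0) • e0v n := by
  refine Prod.ext ?_ (by simp [e0v, p0_apply'])
  funext α; refine Fin.cases ?_ (fun i => ?_) α <;> simp [p0_apply', e0v]

end OpLemmas

abbrev Tf (n : ℕ) := Vv n →ₗ[ℝ] Vv n →ₗ[ℝ] Vv n →ₗ[ℝ] ℝ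

noncomputable def tri (n : ℕ) (C : Tf n) (a b c : Vv n →ₗ[ℝ] Vv n) : Tf n where
  toFun X := LinearMap.compl₁₂ (C (a X)) b c
  map_add' X Y := by
    refine LinearMap.ext fun u => LinearMap.ext fun v => ?_
    simp [LinearMap.compl₁₂_apply, map_add]
  map_smul' r X := by
    refine LinearMap.ext fun u => LinearMap.ext fun v => ?_
    simp [LinearMap.compl₁₂_apply, map_smul]

lemma tri_apply {n : ℕ} (C : Tf n) (a b c : Vv n →ₗ[ℝ] Vv n) (X Y Z : Vv n) :
    tri n C a b c X Y Z = C (a X) (b Y) (c Z) := rfl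

noncomputable def l2flip {n : ℕ} (f : Tf n) : Tf n where
  toFun X := (f X).flip
  map_add' X Y := by
    refine LinearMap.ext fun u => LinearMap.ext fun v => ?_
    simp
  map_smul' r X := by
    refine LinearMap.ext fun u => LinearMap.ext fun v => ?_
    simp

noncomputable def rot {n : ℕ} (f : Tf n) : Tf n := l2flip f.flip

lemma rot_apply {n : ℕ} (f : Tf n) (X Y Z : Vv n) :
    rot f X Y Z = f Z X Y := rfl

/-- The explicit solution `B` with `σ_J B = C₁`, `σ_h B = C₂`. -/
noncomputable def Bsol (n : ℕ) (C₁ C₂ : Tf n) : Tf n :=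
  (6⁻¹ : ℝ) • (
      (tri n C₁ (Hv n) (Th n) (Hv n) + (tri n C₁ (Hv n) (Th n) (Hv n)).flip)
    + (3:ℝ) • (tri n C₁ (Hv n) (Th n) (P0 n) + (tri n C₁ (Hv n) (Th n) (P0 n)).flip)
    + (2:ℝ) • (tri n C₁ (LinearMap.id - Hv n) (Th n) (Hv n)
        + (tri n C₁ (LinearMap.id - Hv n) (Th n) (Hv n)).flip)
    + (tri n C₁ (LinearMap.id - Hv n) (Th n) (P0 n)
        + (tri n C₁ (LinearMap.id - Hv n) (Th n) (P0 n)).flip)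
    - (tri n C₁ (P0 n) (Th n) (Hv n) + (tri n C₁ (P0 n) (Th n) (Hv n)).flip)
    - (2:ℝ) • (tri n C₁ (P0 n) (Th n) (P0 n) + (tri n C₁ (P0 n) (Th n) (P0 n)).flip)
    + (tri n C₁ (Th n) (Hv n) (Hv n) + (tri n C₁ (Th n) (Hv n) (Hv n)).flip)
    + (tri n C₁ (Th n) (Hv n) (P0 n) + (tri n C₁ (Th n) (Hv n) (P0 n)).flip)
    - (tri n C₁ (Th n) (P0 n) (Hv n) + (tri n C₁ (Th n) (P0 n) (Hv n)).flip)
    - (3:ℝ) • (rot (tri n C₁ (Hv n) (Hv n) (Th n))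
        + (rot (tri n C₁ (Hv n) (Hv n) (Th n))).flip)
    + (3:ℝ) • (rot (tri n C₁ (Hv n) (Th n) (P0 n))
        + (rot (tri n C₁ (Hv n) (Th n) (P0 n))).flip)
    + (rot (tri n C₁ (P0 n) (Hv n) (Th n)) + (rot (tri n C₁ (P0 n) (Hv n) (Th n))).flip)
    + (2:ℝ) • (tri n C₂ (Hv n) (Hv n) (Hv n) + (tri n C₂ (Hv n) (Hv n) (Hv n)).flip)
    + (4:ℝ) • (tri n C₂ (LinearMap.id - Hv n) (Hv n) (Hv n)
        + (tri n C₂ (LinearMap.id - Hv n) (Hv n) (Hv n)).flip)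
    - (2:ℝ) • (tri n C₂ (LinearMap.id - Hv n) (Hv n) (P0 n)
        + (tri n C₂ (LinearMap.id - Hv n) (Hv n) (P0 n)).flip)
    + (2:ℝ) • (tri n C₂ (LinearMap.id - Hv n) (P0 n) (Hv n)
        + (tri n C₂ (LinearMap.id - Hv n) (P0 n) (Hv n)).flip)
    - (2:ℝ) • (tri n C₂ (Jv n) (Th n) (Hv n) + (tri n C₂ (Jv n) (Th n) (Hv n)).flip))

set_option maxHeartbeats 1000000 in
/-- Exactness at `F ⊕ F`: the kernel of `τ(C₁,C₂) = (τ_J C₁, τ_h C₂, τ_h C₁ + τ_J C₂)`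
equals the image of `σ²(P) = (σ_J, σ_h) : S²T*⊗T_v* → F ⊕ F`. -/
theorem stmt7 (n : ℕ) (hn : 1 ≤ n) :
    ∀ C₁ ∈ Fsub n, ∀ C₂ ∈ Fsub n,
      (((∀ X Y Z, tauF n (Jv n) C₁ X Y Z = 0) ∧
        (∀ X Y Z, tauF n (Hv n) C₂ X Y Z = 0) ∧
        (∀ X Y Z, tauF n (Hv n) C₁ X Y Z + tauF n (Jv n) C₂ X Y Z = 0)) ↔
      (∃ B ∈ S2Tv n,
        (∀ X Y Z, sigmaF n (Jv n) B X Y Z = C₁ X Y Z) ∧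
        (∀ X Y Z, sigmaF n (Hv n) B X Y Z = C₂ X Y Z))) := by
  intro C₁ hC₁ C₂ hC₂
  obtain ⟨a1C1, a2C1, a3C1⟩ := hC₁
  obtain ⟨a1C2, a2C2, a3C2⟩ := hC₂
  have sb2C1 : ∀ x y z, C₁ x y z = C₁ x (Hv n y) z := by
    intro x y z
    have h0 := a2C1 x (y - Hv n y) z (isVert_sub_hv y)
    rw [map_sub, LinearMap.sub_apply] at h0
    linarith
  have sb3C1 : ∀ x y z, C₁ x y z = C₁ x y (Hv n z) := by
    intro x y z
    have h0 := a3C1 x y (z - Hv n z) (isVert_sub_hv z)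
    rw [map_sub] at h0
    linarith
  have sb2C2 : ∀ x y z, C₂ x y z = C₂ x (Hv n y) z := by
    intro x y z
    have h0 := a2C2 x (y - Hv n y) z (isVert_sub_hv y)
    rw [map_sub, LinearMap.sub_apply] at h0
    linarith
  have sb3C2 : ∀ x y z, C₂ x y z = C₂ x y (Hv n z) := by
    intro x y z
    have h0 := a3C2 x y (z - Hv n z) (isVert_sub_hv z)
    rw [map_sub] at h0
    linarith
  have pzC1 : ∀ x y z, C₁ x (P0 n y) (P0 n z) = 0 := by
    intro x y z
    have h0 : C₁ x (e0v n) (e0v n) = 0 := by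
      have := a1C1 x (e0v n) (e0v n); linarith
    rw [p0_eq_smul y, p0_eq_smul z]
    simp [map_smul, h0]
  have pzC2 : ∀ x y z, C₂ x (P0 n y) (P0 n z) = 0 := by
    intro x y z
    have h0 : C₂ x (e0v n) (e0v n) = 0 := by
      have := a1C2 x (e0v n) (e0v n); linarith
    rw [p0_eq_smul y, p0_eq_smul z]
    simp [map_smul, h0]
  constructor
  · rintro ⟨h1, h2, h3⟩
    have hJ1 : ∀ u v w, C₁ (Jv n u) v w - C₁ (Jv n v) u w + C₁ (Jv n w) u v = 0 :=
      fun u v w => h1 u v w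
    have hH2 : ∀ u v w, C₂ (Hv n u) v w - C₂ (Hv n v) u w + C₂ (Hv n w) u v = 0 :=
      fun u v w => h2 u v w
    have hM : ∀ u v w, (C₁ (Hv n u) v w - C₁ (Hv n v) u w + C₁ (Hv n w) u v)
        + (C₂ (Jv n u) v w - C₂ (Jv n v) u w + C₂ (Jv n w) u v) = 0 :=
      fun u v w => h3 u v w
    refine ⟨Bsol n C₁ C₂, ⟨?_, ?_⟩, ?_, ?_⟩
    · intro X Y Z
      simp only [Bsol, sigmaF, tri_apply, rot_apply, LinearMap.flip_apply, LinearMap.add_apply, LinearMap.sub_apply, LinearMap.smul_apply, smul_eq_mul, LinearMap.id_apply', hv_hv, jv_hv, hv_jv, jv_jv, th_hv, th_jv, jv_th, th_th, p0_hv, hv_p0, p0_p0, p0_jv, jv_p0, p0_th, th_p0, hv_th, map_sub, map_zero, LinearMap.zero_apply, sub_zero, sub_self]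
      ring
    · intro X Y v hv
      have e1 := hv_vert hv
      have e2 := p0_vert hv
      simp only [Bsol, sigmaF, tri_apply, rot_apply, LinearMap.flip_apply, LinearMap.add_apply, LinearMap.sub_apply, LinearMap.smul_apply, smul_eq_mul, LinearMap.id_apply', hv_hv, jv_hv, hv_jv, jv_jv, th_hv, th_jv, jv_th, th_th, p0_hv, hv_p0, p0_p0, p0_jv, jv_p0, p0_th, th_p0, hv_th, map_sub, map_zero, LinearMap.zero_apply, sub_zero, sub_self, e1, e2]
      ring
    · intro X Y Z
      linear_combination (norm := (simp only [Bsol, sigmaF, tri_apply, rot_apply, LinearMap.flip_apply, LinearMap.add_apply, LinearMap.sub_apply, LinearMap.smul_apply, smul_eq_mul, LinearMap.id_apply', hv_hv, jv_hv, hv_jv, jv_jv, th_hv, th_jv, jv_th, th_th, p0_hv, hv_p0, p0_p0, p0_jv, jv_p0, p0_th, th_p0, hv_th, map_sub, map_zero, LinearMap.zero_apply, sub_zero, sub_self]; ring1))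
        (((-2 : ℝ)/3) * (hM (Hv n X) (Hv n Y) (Hv n Z)) +
      ((1 : ℝ)/3) * (hM (Hv n X) (Hv n Y) (P0 n Z)) +
      ((-1 : ℝ)/3) * (hM (Hv n X) (Hv n Z) (P0 n Y)) +
      ((-1 : ℝ)/3) * (hJ1 (Hv n Y) (Hv n Z) (Th n X)) +
      ((-1 : ℝ)/3) * (hM (Hv n Y) (Hv n Z) (P0 n X)) +
      ((1 : ℝ)/6) * (hJ1 (Hv n Y) (Th n X) (P0 n Z)) +
      ((1 : ℝ)/6) * (hM (Hv n Y) (P0 n X) (P0 n Z)) +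
      ((-1 : ℝ)/6) * (hJ1 (Hv n Z) (Th n X) (P0 n Y)) +
      ((-1 : ℝ)/6) * (hM (Hv n Z) (P0 n X) (P0 n Y)) +
      ((2 : ℝ)/3) * (hJ1 (Th n X) (P0 n Y) (P0 n Z)) +
      ((2 : ℝ)/3) * (hJ1 (Th n Y) (P0 n X) (P0 n Z)) +
      ((-2 : ℝ)/3) * (hJ1 (Th n Z) (P0 n X) (P0 n Y)) -
      (1 : ℝ) * (sb2C1 X Y Z) -
      (1 : ℝ) * (sb3C1 X (Hv n Y) Z) -
      (1 : ℝ) * (pzC1 X Y Z) +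
      ((-2 : ℝ)/3) * (pzC1 Y X Z) +
      ((2 : ℝ)/3) * (pzC1 Z X Y) +
      ((-1 : ℝ)/6) * (pzC2 (Jv n Y) X Z) +
      ((1 : ℝ)/6) * (pzC2 (Jv n Z) X Y) +
      ((2 : ℝ)/3) * (pzC1 (P0 n X) Y Z) +
      ((-1 : ℝ)/3) * (a1C1 X (Hv n Y) (Hv n Z)) +
      ((1 : ℝ)/3) * (a1C1 X (Hv n Y) (P0 n Z)) +
      ((-1 : ℝ)/3) * (a1C1 X (Hv n Z) (P0 n Y)) +
      ((1 : ℝ)/6) * (a1C1 X (P0 n Y) (P0 n Z)) +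
      ((1 : ℝ)/3) * (a1C1 (Jv n Y) (Hv n Z) (Th n X)) +
      ((-1 : ℝ)/3) * (a1C1 (Jv n Z) (Hv n Y) (Th n X)) +
      ((1 : ℝ)/6) * (a1C1 (Hv n X) (Hv n Y) (Hv n Z)) +
      ((-1 : ℝ)/6) * (a1C1 (Hv n X) (Hv n Y) (P0 n Z)) +
      ((1 : ℝ)/6) * (a1C1 (Hv n X) (Hv n Z) (P0 n Y)) +
      ((1 : ℝ)/3) * (a1C1 (Hv n X) (P0 n Y) (P0 n Z)) +
      ((-1 : ℝ)/6) * (a1C1 (Hv n Y) (Hv n Z) (P0 n X)) +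
      ((1 : ℝ)/2) * (a1C1 (Hv n Y) (P0 n X) (P0 n Z)) +
      ((1 : ℝ)/6) * (a1C1 (Hv n Z) (Hv n Y) (P0 n X)) +
      ((-1 : ℝ)/2) * (a1C1 (Hv n Z) (P0 n X) (P0 n Y)) +
      ((1 : ℝ)/6) * (a1C1 (P0 n X) (Hv n Y) (Hv n Z)) +
      ((-1 : ℝ)/6) * (a1C1 (P0 n X) (Hv n Y) (P0 n Z)) +
      ((1 : ℝ)/6) * (a1C1 (P0 n X) (Hv n Z) (P0 n Y)) +
      ((-1 : ℝ)/3) * (a1C1 (P0 n X) (P0 n Y) (P0 n Z)) +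
      ((1 : ℝ)/6) * (a1C1 (P0 n Y) (Hv n Z) (P0 n X)) +
      ((-1 : ℝ)/6) * (a1C1 (P0 n Z) (Hv n Y) (P0 n X)) +
      ((1 : ℝ)/3) * (a1C2 (Jv n X) (Hv n Y) (Hv n Z)) +
      ((-1 : ℝ)/3) * (a1C2 (Jv n X) (Hv n Y) (P0 n Z)) +
      ((1 : ℝ)/3) * (a1C2 (Jv n X) (Hv n Z) (P0 n Y)) +
      ((1 : ℝ)/3) * (a1C2 (Jv n Y) (Hv n Z) (P0 n X)) +
      ((-1 : ℝ)/3) * (a1C2 (Jv n Z) (Hv n Y) (P0 n X)))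
    · intro X Y Z
      linear_combination (norm := (simp only [Bsol, sigmaF, tri_apply, rot_apply, LinearMap.flip_apply, LinearMap.add_apply, LinearMap.sub_apply, LinearMap.smul_apply, smul_eq_mul, LinearMap.id_apply', hv_hv, jv_hv, hv_jv, jv_jv, th_hv, th_jv, jv_th, th_th, p0_hv, hv_p0, p0_p0, p0_jv, jv_p0, p0_th, th_p0, hv_th, map_sub, map_zero, LinearMap.zero_apply, sub_zero, sub_self]; ring1))
        (((-1 : ℝ)/3) * (hH2 (Hv n X) (Hv n Y) (Hv n Z)) +
      ((1 : ℝ)/3) * (hM (Hv n Y) (Hv n Z) (Th n X)) +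
      ((1 : ℝ)/3) * (hM (Th n X) (P0 n Y) (P0 n Z)) -
      (1 : ℝ) * (sb2C2 X Y Z) -
      (1 : ℝ) * (sb3C2 X (Hv n Y) Z) +
      ((-1 : ℝ)/3) * (pzC2 X Y Z) +
      ((1 : ℝ)/3) * (pzC2 (Hv n X) Y Z) +
      ((-1 : ℝ)/3) * (pzC1 (Th n X) Y Z) +
      ((1 : ℝ)/6) * (a1C1 (Hv n Y) (Hv n Z) (Th n X)) +
      ((-1 : ℝ)/6) * (a1C1 (Hv n Z) (Hv n Y) (Th n X)) +
      ((-1 : ℝ)/6) * (a1C1 (P0 n Y) (Hv n Z) (Th n X)) +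
      ((1 : ℝ)/6) * (a1C1 (P0 n Z) (Hv n Y) (Th n X)) +
      ((-1 : ℝ)/6) * (a1C1 (Th n X) (Hv n Y) (Hv n Z)) +
      ((1 : ℝ)/6) * (a1C1 (Th n X) (Hv n Y) (P0 n Z)) +
      ((-1 : ℝ)/6) * (a1C1 (Th n X) (Hv n Z) (P0 n Y)) +
      ((-2 : ℝ)/3) * (a1C2 X (Hv n Y) (Hv n Z)) +
      ((-1 : ℝ)/3) * (a1C2 X (Hv n Y) (P0 n Z)) +
      ((1 : ℝ)/3) * (a1C2 X (Hv n Z) (P0 n Y)) +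
      ((-1 : ℝ)/3) * (a1C2 (Jv n Y) (Hv n Z) (Th n X)) +
      ((1 : ℝ)/3) * (a1C2 (Jv n Z) (Hv n Y) (Th n X)) +
      ((1 : ℝ)/3) * (a1C2 (Hv n X) (Hv n Y) (Hv n Z)) +
      ((1 : ℝ)/3) * (a1C2 (Hv n X) (Hv n Y) (P0 n Z)) +
      ((-1 : ℝ)/3) * (a1C2 (Hv n X) (Hv n Z) (P0 n Y)))
  · rintro ⟨B, hBmem, hs1, hs2⟩
    obtain ⟨bsym, bsb⟩ := hBmem
    refine ⟨?_, ?_, ?_⟩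
    · intro X Y Z
      linear_combination (norm := (simp only [tauF, sigmaF]; ring1))
        (- hs1 (Jv n X) Y Z + hs1 (Jv n Y) X Z - hs1 (Jv n Z) X Y
        + bsym (Jv n X) (Jv n Y) Z + bsym (Jv n Z) (Jv n X) Y + bsym (Jv n Y) (Jv n Z) X)
    · intro X Y Z
      linear_combination (norm := (simp only [tauF, sigmaF]; ring1))
        (- hs2 (Hv n X) Y Z + hs2 (Hv n Y) X Z - hs2 (Hv n Z) X Y
        + bsym (Hv n X) (Hv n Y) Z + bsym (Hv n Z) (Hv n X) Y + bsym (Hv n Y) (Hv n Z) X)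
    · intro X Y Z
      linear_combination (norm := (simp only [tauF, sigmaF]; ring1))
        (- hs1 (Hv n X) Y Z + hs1 (Hv n Y) X Z - hs1 (Hv n Z) X Y
        - hs2 (Jv n X) Y Z + hs2 (Jv n Y) X Z - hs2 (Jv n Z) X Y
        + bsym (Hv n X) (Jv n Y) Z + bsym (Jv n Z) (Hv n X) Y
        + bsym (Jv n X) (Hv n Y) Z + bsym (Hv n Y) (Jv n Z) X
        + bsym (Hv n Z) (Jv n X) Y + bsym (Jv n Y) (Hv n Z) X)
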